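/- Let λ_i ≥ 0, i ∈ ℕ, be such that ∑_{i=1}^∞ λ_i = 1. Let d ∈ ℕ, let D ⊆ ℝ^d be a convex set, and let x_i ∈ D, i ∈ ℕ, be such that ∑_{i=1}^∞ λ_i ‖x_i‖ < ∞. Then ∑_{i=1}^∞ λ_i x_i converges to a point of D, and for every convex function f : D → ℝ, f(∑_{i=1}^∞ λ_i x_i) ≤ ∑_{i=1}^∞ λ_i f(x_i), where the right-hand side is either a convergent series or diverges to +∞. -/

import Mathlib

open Filter Set Topology
open scoped Pointwise

section SigmaConvexity

variable {F : Type*} [NormedAddCommGroup F] [NormedSpace ℝ F]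

/-- limit helper: if `t*A + (1-t)*B < c` for all small positive `t`, then `B ≤ c`. -/
lemma combo_limit_le {A B c : ℝ} (h : ∀ t : ℝ, 0 < t → t ≤ 1 → t * A + (1 - t) * B < c) :
    B ≤ c := by
  have h1 : Tendsto (fun n : ℕ => (1 : ℝ)/(n+1) * A + (1 - 1/(n+1)) * B) atTop
      (𝓝 ((0:ℝ) * A + (1 - 0) * B)) := by
    have h0 : Tendsto (fun n : ℕ => (1:ℝ)/(n+1)) atTop (𝓝 0) :=
      tendsto_one_div_add_atTop_nhds_zero_nat
    exact (h0.mul_const A).add (((tendsto_const_nhds (x := (1:ℝ))).sub h0).mul_const B)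
  simp only [zero_mul, sub_zero, one_mul, zero_add] at h1
  refine le_of_tendsto h1 (Filter.Eventually.of_forall fun n => ?_)
  have hn1 : (0:ℝ) < (n:ℝ) + 1 := by positivity
  refine (h _ (by positivity) ?_).le
  rw [div_le_one hn1]
  linarith [Nat.cast_nonneg (α := ℝ) n]

/-- The infinite convex combination is in the closure of the convex hull of the points
with nonzero weight. -/
lemma mem_closure_hull (lam : ℕ → ℝ) (hlam : ∀ i, 0 ≤ lam i) (hsum : HasSum lam 1)
    (y : ℕ → F) {P : F} (hy : HasSum (fun i => lam i • y i) P) :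
    P ∈ closure (convexHull ℝ (y '' {i | lam i ≠ 0})) := by
  have hs : Tendsto (fun n => ∑ i ∈ Finset.range n, lam i) atTop (𝓝 1) :=
    hsum.tendsto_sum_nat
  have hv : Tendsto (fun n => ∑ i ∈ Finset.range n, lam i • y i) atTop (𝓝 P) :=
    hy.tendsto_sum_nat
  have hq : Tendsto (fun n => (Finset.range n).centerMass lam y) atTop (𝓝 P) := by
    have : Tendsto (fun n => (∑ i ∈ Finset.range n, lam i)⁻¹ •
        ∑ i ∈ Finset.range n, lam i • y i) atTop (𝓝 ((1:ℝ)⁻¹ • P)) :=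
      ((hs.inv₀ one_ne_zero)).smul hv
    simpa [Finset.centerMass] using this
  have hev : ∀ᶠ n in atTop, (Finset.range n).centerMass lam y ∈
      convexHull ℝ (y '' {i | lam i ≠ 0}) := by
    filter_upwards [hs.eventually (eventually_gt_nhds one_pos)] with n hn
    rw [← Finset.centerMass_filter_ne_zero]
    refine Finset.centerMass_mem_convexHull _ (fun i _ => hlam i) ?_ ?_
    · rwa [Finset.sum_filter_ne_zero]
    · intro i hi
      exact mem_image_of_mem _ (Finset.mem_filter.1 hi).2
  exact mem_closure_of_tendsto hq hev

/-- If the span of `s` is everything and `0` is in the closure of the hull, the hull has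
nonempty interior. -/
lemma interior_hull_nonempty [FiniteDimensional ℝ F] {s : Set F}
    (h0 : (0:F) ∈ closure (convexHull ℝ s)) (hspan : Submodule.span ℝ s = ⊤) :
    (interior (convexHull ℝ s)).Nonempty := by
  rw [Convex.interior_nonempty_iff_affineSpan_eq_top (convex_convexHull ℝ s),
    affineSpan_convexHull]
  have h0' : (0:F) ∈ affineSpan ℝ s := by
    have hcl : IsClosed ((affineSpan ℝ s : Set F)) :=
      (affineSpan ℝ s).closed_of_finiteDimensional
    have hsub : closure (convexHull ℝ s) ⊆ (affineSpan ℝ s : Set F) := by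
      refine hcl.closure_subset_iff.2 ?_
      exact convexHull_min (subset_affineSpan ℝ s) (AffineSubspace.convex _)
    exact hsub h0
  rw [eq_top_iff]
  intro q _
  have hq : q - 0 ∈ (affineSpan ℝ s).direction := by
    have : Submodule.span ℝ s ≤ (affineSpan ℝ s).direction := by
      rw [Submodule.span_le]
      intro v hv
      simpa using AffineSubspace.vsub_mem_direction (subset_affineSpan ℝ s hv) h0'
    exact this (by rw [hspan]; trivial)
  simpa using AffineSubspace.vadd_mem_of_mem_direction hq h0'

lemma sigma_convex_top [FiniteDimensional ℝ F] (lam : ℕ → ℝ) (hlam : ∀ i, 0 ≤ lam i)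
    (hsum : HasSum lam 1) (y : ℕ → F)
    (hy : HasSum (fun i => lam i • y i) 0)
    (hspan : Submodule.span ℝ (y '' {i | lam i ≠ 0}) = ⊤) :
    (0:F) ∈ convexHull ℝ (y '' {i | lam i ≠ 0}) := by
  set S := {i | lam i ≠ 0} with hSdef
  set C := convexHull ℝ (y '' S) with hCdef
  have hCvx : Convex ℝ C := convex_convexHull ℝ _
  have h0cl : (0:F) ∈ closure C := mem_closure_hull lam hlam hsum y hy
  obtain ⟨z, hz⟩ := interior_hull_nonempty h0cl hspan
  by_cases h0U : (0:F) ∈ interior (closure C)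
  · -- find small ε with -ε • z ∈ closure C, then combine
    have htend : Tendsto (fun t : ℝ => -t • z) (𝓝[>] 0) (𝓝 (0:F)) := by
      have : Tendsto (fun t : ℝ => -t • z) (𝓝 0) (𝓝 ((-(0:ℝ)) • z)) := by
        exact ((continuous_neg.smul continuous_const).tendsto 0)
      simpa using this.mono_left nhdsWithin_le_nhds
    have hev : ∀ᶠ t in 𝓝[>] (0:ℝ), -t • z ∈ interior (closure C) :=
      htend.eventually (isOpen_interior.eventually_mem h0U)
    obtain ⟨ε, hεmem, hεpos⟩ := (hev.and self_mem_nhdsWithin).exists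
    have hcombo : (ε/(1+ε)) • z + (1/(1+ε)) • (-ε • z) ∈ interior C := by
      refine hCvx.combo_interior_closure_mem_interior hz (interior_subset hεmem) ?_ ?_ ?_
      · positivity
      · positivity
      · field_simp; ring
    have h0z : (ε/(1+ε)) • z + (1/(1+ε)) • (-ε • z) = (0:F) := by
      rw [smul_smul, ← add_smul]
      have : ε / (1 + ε) + 1 / (1 + ε) * -ε = 0 := by field_simp; ring
      rw [this, zero_smul]
    rw [h0z] at hcombo
    exact interior_subset hcombo
  · exfalso
    obtain ⟨ℓ, hℓ⟩ := geometric_hahn_banach_open_point (hCvx.closure.interior)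
      isOpen_interior h0U
    simp only [map_zero] at hℓ
    have hzU : z ∈ interior (closure C) := interior_mono subset_closure hz
    have hℓz : ℓ z < 0 := hℓ z hzU
    have hC0 : ∀ c ∈ C, ℓ c ≤ 0 := by
      intro c hc
      refine combo_limit_le (A := ℓ z) fun t ht0 ht1 => ?_
      have hmem : t • z + (1 - t) • c ∈ interior C :=
        hCvx.combo_interior_closure_mem_interior hz (subset_closure hc) ht0
          (by linarith) (by ring)
      have := hℓ _ (interior_mono subset_closure hmem)
      simpa [map_add, map_smul, smul_eq_mul] using this
    have hsum0 : HasSum (fun i => lam i * ℓ (y i)) 0 := by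
      have := hy.mapL ℓ
      simpa [map_smul, smul_eq_mul] using this
    have hzero : ∀ i, lam i * ℓ (y i) = 0 := by
      have hnn : ∀ i, 0 ≤ -(lam i * ℓ (y i)) := by
        intro i
        by_cases hi : lam i = 0
        · simp [hi]
        · have : ℓ (y i) ≤ 0 := hC0 _ (subset_convexHull ℝ _ (mem_image_of_mem _ hi))
          have := mul_nonpos_of_nonneg_of_nonpos (hlam i) this
          linarith
      have h0s : HasSum (fun i => -(lam i * ℓ (y i))) 0 := by simpa using hsum0.neg
      have := (hasSum_zero_iff_of_nonneg hnn).1 h0s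
      intro i
      have := congrFun this i
      simp only [Pi.zero_apply] at this
      linarith
    have hker : Submodule.span ℝ (y '' S) ≤ LinearMap.ker (ℓ : F →ₗ[ℝ] ℝ) := by
      rw [Submodule.span_le]
      rintro _ ⟨i, hi, rfl⟩
      have hi' : lam i ≠ 0 := hi
      have : ℓ (y i) = 0 := by
        have := hzero i
        rcases mul_eq_zero.1 this with h | h
        · exact absurd h hi'
        · exact h
      simpa [LinearMap.mem_ker] using this
    have : ℓ z = 0 := by
      have := hker (by rw [hspan]; trivial : z ∈ Submodule.span ℝ (y '' S))
      simpa [LinearMap.mem_ker] using this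
    linarith

/-- Transfer the data into the subtype of the span, where the span is everything. -/
lemma to_span_top [FiniteDimensional ℝ F] (lam : ℕ → ℝ) (hlam : ∀ i, 0 ≤ lam i)
    (y : ℕ → F) (hy : HasSum (fun i => lam i • y i) 0)
    (hnorm : Summable (fun i => lam i * ‖y i‖)) :
    ∃ y' : ℕ → (Submodule.span ℝ (y '' {i | lam i ≠ 0})),
      (∀ i, lam i ≠ 0 → (y' i : F) = y i) ∧
      HasSum (fun i => lam i • y' i) 0 ∧
      Submodule.span ℝ (y' '' {i | lam i ≠ 0}) = ⊤ := by
  have hyV : ∀ i, lam i ≠ 0 → y i ∈ Submodule.span ℝ (y '' {i | lam i ≠ 0}) := fun i hi =>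
    Submodule.subset_span (mem_image_of_mem _ hi)
  set V := Submodule.span ℝ (y '' {i | lam i ≠ 0}) with hVdef
  set y' : ℕ → V := fun i => if h : lam i = 0 then 0 else ⟨y i, hyV i h⟩ with hy'def
  have hcoe2 : ∀ i, lam i ≠ 0 → (y' i : F) = y i := by
    intro i hi; simp [hy'def, hi]
  refine ⟨y', hcoe2, ?_, ?_⟩
  · have hcoe : ∀ i, (↑(lam i • y' i) : F) = lam i • y i := by
      intro i
      by_cases hi : lam i = 0
      · simp [hi]
      · push_cast
        rw [hcoe2 i hi]
    have hsml : Summable (fun i => lam i • y' i) := by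
      refine Summable.of_norm_bounded hnorm fun i => ?_
      by_cases hi : lam i = 0
      · simp [hi, mul_nonneg (hlam i) (norm_nonneg _)]
      · rw [norm_smul, Real.norm_eq_abs, abs_of_nonneg (hlam i)]
        have : ‖y' i‖ = ‖y i‖ := by
          rw [show ‖y' i‖ = ‖(y' i : F)‖ from rfl, hcoe2 i hi]
        rw [this]
    obtain ⟨v, hv⟩ := hsml
    have hveq : (v : F) = 0 := by
      have h1 : HasSum (fun i => ((lam i • y' i : V) : F)) (v : F) := hv.mapL V.subtypeL
      have h2 : HasSum (fun i => lam i • y i) (v : F) := by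
        simpa only [hcoe] using h1
      exact h2.unique hy
    have : v = 0 := by exact_mod_cast hveq
    rwa [this] at hv
  · apply Submodule.map_injective_of_injective V.injective_subtype
    rw [Submodule.map_span, Submodule.map_top, Submodule.range_subtype]
    have himg : V.subtype '' (y' '' {i | lam i ≠ 0}) = y '' {i | lam i ≠ 0} := by
      rw [← image_comp]
      exact image_congr fun i hi => hcoe2 i hi
    rw [himg]

/-- σ-convexity, centered version. -/
lemma sigma_convex [FiniteDimensional ℝ F] (lam : ℕ → ℝ) (hlam : ∀ i, 0 ≤ lam i)
    (hsum : HasSum lam 1) (y : ℕ → F)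
    (hy : HasSum (fun i => lam i • y i) 0)
    (hnorm : Summable (fun i => lam i * ‖y i‖)) :
    (0:F) ∈ convexHull ℝ (y '' {i | lam i ≠ 0}) := by
  obtain ⟨y', hcoe, hy', hspan'⟩ := to_span_top lam hlam y hy hnorm
  have h0 := sigma_convex_top lam hlam hsum y' hy' hspan'
  have h1 := mem_image_of_mem (Submodule.span ℝ (y '' {i | lam i ≠ 0})).subtype h0
  rw [(Submodule.span ℝ (y '' {i | lam i ≠ 0})).subtype.image_convexHull] at h1
  have himg : (Submodule.span ℝ (y '' {i | lam i ≠ 0})).subtype '' (y' '' {i | lam i ≠ 0})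
      = y '' {i | lam i ≠ 0} := by
    rw [← image_comp]
    refine image_congr fun i hi => ?_
    simpa using hcoe i hi
  rw [himg] at h1
  simpa using h1

/-- σ-convexity for membership in a convex set. -/
lemma sigma_convex_mem [FiniteDimensional ℝ F] (lam : ℕ → ℝ) (hlam : ∀ i, 0 ≤ lam i)
    (hsum : HasSum lam 1) (y : ℕ → F) {P : F}
    (hy : HasSum (fun i => lam i • y i) P)
    (hnorm : Summable (fun i => lam i * ‖y i‖))
    {D : Set F} (hD : Convex ℝ D) (hyD : ∀ i, lam i ≠ 0 → y i ∈ D) : P ∈ D := by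
  have hy0 : HasSum (fun i => lam i • (y i - P)) 0 := by
    have := hy.sub (hsum.smul_const P)
    simpa [smul_sub] using this
  have hnorm0 : Summable (fun i => lam i * ‖y i - P‖) := by
    refine Summable.of_nonneg_of_le (fun i => mul_nonneg (hlam i) (norm_nonneg _))
      (fun i => ?_) (hnorm.add (hsum.summable.mul_right ‖P‖))
    calc lam i * ‖y i - P‖ ≤ lam i * (‖y i‖ + ‖P‖) :=
          mul_le_mul_of_nonneg_left (norm_sub_le _ _) (hlam i)
      _ = lam i * ‖y i‖ + lam i * ‖P‖ := by ring
  have h0 := sigma_convex lam hlam hsum (fun i => y i - P) hy0 hnorm0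
  have himg : (fun i => y i - P) '' {i | lam i ≠ 0} = (-P) +ᵥ (y '' {i | lam i ≠ 0}) := by
    rw [← Set.image_vadd, ← image_comp]
    exact image_congr fun i _ => by simp [sub_eq_neg_add]
  rw [himg, convexHull_vadd] at h0
  obtain ⟨q, hq, hq0⟩ := h0
  have hqP : q = P := by
    have h2 : -P + q = 0 := hq0
    have := congrArg (fun w => P + w) h2
    simpa [← add_assoc] using this
  rw [hqP] at hq
  exact convexHull_min (by rintro _ ⟨i, hi, rfl⟩; exact hyD i hi) hD hq

/-- An affine minorant of a convex function valid at all points of the combination. -/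
lemma exists_affine_minorant [FiniteDimensional ℝ F] (lam : ℕ → ℝ) (hlam : ∀ i, 0 ≤ lam i)
    (hsum : HasSum lam 1) (y : ℕ → F)
    (hy : HasSum (fun i => lam i • y i) 0)
    (hnorm : Summable (fun i => lam i * ‖y i‖))
    {D : Set F} {f : F → ℝ} (hf : ConvexOn ℝ D f)
    (hyD : ∀ i, lam i ≠ 0 → y i ∈ D) :
    ∃ (G : F →L[ℝ] ℝ) (c : ℝ), ∀ i, lam i ≠ 0 → G (y i) + c ≤ f (y i) := by
  set W := Submodule.span ℝ (y '' {i | lam i ≠ 0}) with hWdef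
  obtain ⟨y', hcoe, hy', hspan'⟩ := to_span_top lam hlam y hy hnorm
  have h0cl : (0 : W) ∈ closure (convexHull ℝ (y' '' {i | lam i ≠ 0})) :=
    mem_closure_hull lam hlam hsum y' hy'
  obtain ⟨z, hz⟩ := interior_hull_nonempty h0cl hspan'
  have hfW : ConvexOn ℝ (⇑W.subtype.toAffineMap ⁻¹' D) (f ∘ ⇑W.subtype.toAffineMap) :=
    hf.comp_affineMap W.subtype.toAffineMap
  set DW : Set W := ⇑W.subtype.toAffineMap ⁻¹' D with hDWdef
  set fW : W → ℝ := f ∘ ⇑W.subtype.toAffineMap with hfWdef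
  have hptsDW : ∀ i, lam i ≠ 0 → y' i ∈ DW := by
    intro i hi
    show (y' i : F) ∈ D
    rw [hcoe i hi]
    exact hyD i hi
  have hC'DW : convexHull ℝ (y' '' {i | lam i ≠ 0}) ⊆ DW :=
    convexHull_min (by rintro _ ⟨i, hi, rfl⟩; exact hptsDW i hi) hfW.1
  have hzDW : z ∈ interior DW := interior_mono hC'DW hz
  have hcont : ContinuousAt fW z :=
    (hfW.continuousOn_interior z hzDW).continuousAt (isOpen_interior.mem_nhds hzDW)
  -- a ball on which fW < fW z + 1 and which is inside DW
  obtain ⟨r, hr, hball⟩ : ∃ r > 0, ∀ w : W, dist w z < r → fW w < fW z + 1 ∧ w ∈ interior DW := by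
    have h1 : ∀ᶠ w in 𝓝 z, fW w < fW z + 1 :=
      hcont.eventually (eventually_lt_nhds (by linarith : fW z < fW z + 1))
    have h2 : ∀ᶠ w in 𝓝 z, w ∈ interior DW := isOpen_interior.eventually_mem hzDW
    obtain ⟨r, hr, H⟩ := Metric.eventually_nhds_iff.1 (h1.and h2)
    exact ⟨r, hr, fun w hw => H hw⟩
  set b := fW z + 1 with hbdef
  set Epi : Set (W × ℝ) := {q : W × ℝ | q.1 ∈ DW ∧ fW q.1 ≤ q.2} with hEpidef
  have hEpi : Convex ℝ Epi := hfW.convex_epigraph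
  have hsubset : Metric.ball z r ×ˢ Ioi b ⊆ Epi := by
    rintro ⟨w, t⟩ ⟨hw, ht⟩
    have := hball w (Metric.mem_ball.1 hw)
    exact ⟨interior_subset this.2, le_of_lt (lt_trans this.1 ht)⟩
  have hzin : (z, b + 1) ∈ interior Epi :=
    interior_maximal hsubset (Metric.isOpen_ball.prod isOpen_Ioi)
      ⟨Metric.mem_ball_self hr, by simp [hbdef]⟩
  have hq₀ : ((z, fW z - 1) : W × ℝ) ∉ interior Epi := by
    intro h
    have := (interior_subset h).2
    simp only [hEpidef, mem_setOf_eq] at this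
    linarith
  obtain ⟨ℓ, hℓ⟩ := geometric_hahn_banach_open_point hEpi.interior isOpen_interior hq₀
  set g : W →L[ℝ] ℝ := ℓ.comp (ContinuousLinearMap.inl ℝ W ℝ) with hgdef
  set s : ℝ := ℓ (0, 1) with hsdef
  have hdec : ∀ (w : W) (t : ℝ), ℓ (w, t) = g w + t * s := by
    intro w t
    have h1 : ((w, t) : W × ℝ) = (w, 0) + t • ((0 : W), (1 : ℝ)) := by
      simp [Prod.ext_iff]
    rw [h1, map_add, map_smul, smul_eq_mul]
    rfl
  have hEle : ∀ q ∈ Epi, ℓ q ≤ ℓ ((z, fW z - 1) : W × ℝ) := by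
    intro q hq
    refine combo_limit_le (A := ℓ ((z, b + 1) : W × ℝ)) fun t ht0 ht1 => ?_
    have hmem : t • ((z, b+1) : W × ℝ) + (1 - t) • q ∈ interior Epi :=
      hEpi.combo_interior_closure_mem_interior hzin (subset_closure hq) ht0
        (by linarith) (by ring)
    have h2 := hℓ _ hmem
    rw [map_add, map_smul, map_smul, smul_eq_mul, smul_eq_mul] at h2
    exact h2
  have hs : s < 0 := by
    have h1 := hℓ _ hzin
    rw [hdec, hdec] at h1
    have hb1 : b + 1 = fW z + 2 := by rw [hbdef]; ring
    nlinarith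
  have hspos : (0:ℝ) < -s := by linarith
  have hpts : ∀ i, lam i ≠ 0 → g (y' i) + f (y i) * s ≤ g z + (fW z - 1) * s := by
    intro i hi
    have hmem : ((y' i, fW (y' i)) : W × ℝ) ∈ Epi := ⟨hptsDW i hi, le_refl _⟩
    have h1 := hEle _ hmem
    rw [hdec, hdec] at h1
    have hfival : fW (y' i) = f (y i) := by
      simp only [hfWdef, Function.comp_apply]
      congr 1
      exact hcoe i hi
    rwa [hfival] at h1
  obtain ⟨G0, hG0, -⟩ := exists_extension_norm_eq W g
  refine ⟨(-s)⁻¹ • G0, (-s)⁻¹ * (-(g z)) + fW z - 1, fun i hi => ?_⟩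
  have hGyi : G0 (y i) = g (y' i) := by
    rw [← hcoe i hi]
    exact hG0 (y' i)
  rw [ContinuousLinearMap.smul_apply, smul_eq_mul, hGyi]
  have h1 := hpts i hi
  have h2 : g (y' i) - g z ≤ (-s) * (f (y i) - (fW z - 1)) := by nlinarith
  have h3 : (-s)⁻¹ * (g (y' i) - g z) ≤ f (y i) - (fW z - 1) := by
    rw [inv_mul_le_iff₀ hspos]
    linarith [h2]
  have h4 : (-s)⁻¹ * g (y' i) + (-s)⁻¹ * (-(g z)) = (-s)⁻¹ * (g (y' i) - g z) := by ring
  linarith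


end SigmaConvexity

/-- If `λ_i ≥ 0` with `∑ λ_i = 1`, `D ⊆ ℝ^d` convex, `x_i ∈ D` with `∑ λ_i ‖x_i‖ < ∞`,
then `∑ λ_i x_i` converges to a point of `D`, and for every convex `f : D → ℝ`,
`f(∑ λ_i x_i) ≤ ∑ λ_i f(x_i)`, where the right-hand side either converges or diverges
to `+∞`. -/
theorem stmt_7 (lam : ℕ → ℝ) (hlam : ∀ i, 0 ≤ lam i) (hsum : HasSum lam 1)
    (d : ℕ) (D : Set (EuclideanSpace ℝ (Fin d))) (hD : Convex ℝ D)
    (x : ℕ → EuclideanSpace ℝ (Fin d)) (hx : ∀ i, x i ∈ D)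
    (hnorm : Summable (fun i => lam i * ‖x i‖)) :
    Summable (fun i => lam i • x i) ∧ (∑' i, lam i • x i) ∈ D ∧
      ∀ f : EuclideanSpace ℝ (Fin d) → ℝ, ConvexOn ℝ D f →
        (Summable (fun i => lam i * f (x i)) ∨
          Filter.Tendsto (fun n => ∑ i ∈ Finset.range n, lam i * f (x i))
            Filter.atTop Filter.atTop) ∧
        (Summable (fun i => lam i * f (x i)) →
          f (∑' i, lam i • x i) ≤ ∑' i, lam i * f (x i)) := by
  have hsml : Summable (fun i => lam i • x i) := by
    refine Summable.of_norm ?_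
    have : (fun i => ‖lam i • x i‖) = fun i => lam i * ‖x i‖ := by
      funext i
      rw [norm_smul, Real.norm_eq_abs, abs_of_nonneg (hlam i)]
    rw [this]
    exact hnorm
  set p := ∑' i, lam i • x i with hpdef
  have hP : HasSum (fun i => lam i • x i) p := hsml.hasSum
  have hpD : p ∈ D := sigma_convex_mem lam hlam hsum x hP hnorm hD (fun i _ => hx i)
  refine ⟨hsml, hpD, fun f hf => ?_⟩
  -- centered points
  have hy0 : HasSum (fun i => lam i • (x i - p)) 0 := by
    have := hP.sub (hsum.smul_const p)
    simpa [smul_sub] using this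
  have hnorm0 : Summable (fun i => lam i * ‖x i - p‖) := by
    refine Summable.of_nonneg_of_le (fun i => mul_nonneg (hlam i) (norm_nonneg _))
      (fun i => ?_) (hnorm.add (hsum.summable.mul_right ‖p‖))
    calc lam i * ‖x i - p‖ ≤ lam i * (‖x i‖ + ‖p‖) :=
          mul_le_mul_of_nonneg_left (norm_sub_le _ _) (hlam i)
      _ = lam i * ‖x i‖ + lam i * ‖p‖ := by ring
  -- convexity of f transported along translation by p
  set g : EuclideanSpace ℝ (Fin d) →ᵃ[ℝ] EuclideanSpace ℝ (Fin d) :=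
    (AffineEquiv.vaddConst ℝ p).toAffineMap with hgdef
  have hgapp : ∀ v, g v = v + p := fun v => rfl
  have hfg : ConvexOn ℝ (⇑g ⁻¹' D) (f ∘ ⇑g) := hf.comp_affineMap g
  have hyg : ∀ i, lam i ≠ 0 → x i - p ∈ ⇑g ⁻¹' D := by
    intro i _
    show g (x i - p) ∈ D
    rw [hgapp, sub_add_cancel]
    exact hx i
  obtain ⟨G, c, hGc⟩ := exists_affine_minorant lam hlam hsum (fun i => x i - p) hy0 hnorm0
    hfg hyg
  have hGc' : ∀ i, lam i ≠ 0 → G (x i - p) + c ≤ f (x i) := by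
    intro i hi
    have := hGc i hi
    rwa [show (f ∘ ⇑g) (x i - p) = f (x i) by
      simp only [Function.comp_apply]; rw [hgapp, sub_add_cancel]] at this
  -- the minorant sequence
  set m : ℕ → ℝ := fun i => lam i * (G (x i - p) + c) with hmdef
  have hmsml : Summable m := by
    refine Summable.of_norm_bounded ((hnorm0.mul_left ‖G‖).add
      (hsum.summable.mul_right |c|)) fun i => ?_
    rw [hmdef]
    simp only [Real.norm_eq_abs, abs_mul, abs_of_nonneg (hlam i)]
    calc lam i * |G (x i - p) + c| ≤ lam i * (|G (x i - p)| + |c|) :=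
          mul_le_mul_of_nonneg_left (abs_add_le _ _) (hlam i)
      _ ≤ lam i * (‖G‖ * ‖x i - p‖ + |c|) := by
          refine mul_le_mul_of_nonneg_left (add_le_add_left ?_ _) (hlam i)
          exact G.le_opNorm _
      _ = ‖G‖ * (lam i * ‖x i - p‖) + lam i * |c| := by ring
  set a : ℕ → ℝ := fun i => lam i * f (x i) with hadef
  set b : ℕ → ℝ := fun i => a i - m i with hbdef
  have hbnn : ∀ i, 0 ≤ b i := by
    intro i
    by_cases hi : lam i = 0
    · simp [hbdef, hadef, hmdef, hi]
    · have h1 := hGc' i hi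
      have := mul_le_mul_of_nonneg_left h1 (hlam i)
      simp only [hbdef, hadef, hmdef]
      linarith
  have hab : ∀ i, a i = b i + m i := fun i => by simp [hbdef]
  constructor
  · -- dichotomy
    by_cases hbs : Summable b
    · left
      have : Summable (fun i => b i + m i) := hbs.add hmsml
      simpa [← hab] using this
    · right
      have hdiv : Tendsto (fun n => ∑ i ∈ Finset.range n, b i) atTop atTop :=
        (not_summable_iff_tendsto_nat_atTop_of_nonneg hbnn).1 hbs
      have hmt : Tendsto (fun n => ∑ i ∈ Finset.range n, m i) atTop (𝓝 (∑' i, m i)) :=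
        hmsml.hasSum.tendsto_sum_nat
      have := hdiv.atTop_add hmt
      refine this.congr fun n => ?_
      rw [← Finset.sum_add_distrib]
      exact Finset.sum_congr rfl fun i _ => (hab i).symm
  · -- Jensen inequality
    intro hsumf
    set A := ∑' i, lam i * f (x i) with hAdef
    have hA : HasSum a A := hsumf.hasSum
    -- absolute summability of a
    have habs : Summable (fun i => |a i|) := by
      refine Summable.of_nonneg_of_le (fun i => abs_nonneg _) (fun i => ?_)
        ((hsumf.sub hmsml).add hmsml.abs)
      calc |a i| = |b i + m i| := by rw [hab]
        _ ≤ |b i| + |m i| := abs_add_le _ _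
        _ = b i + |m i| := by rw [abs_of_nonneg (hbnn i)]
        _ = (a i - m i) + |m i| := by rw [hbdef]
    -- epigraph points
    set z : ℕ → (EuclideanSpace ℝ (Fin d)) × ℝ := fun i => (x i, f (x i)) with hzdef
    have hz : HasSum (fun i => lam i • z i) (p, A) := by
      have h1 := hP.prodMk hA
      have h2 : (fun i => lam i • z i) = fun i => (lam i • x i, a i) := by
        funext i
        rw [hzdef]
        simp only [Prod.smul_mk, smul_eq_mul, hadef]
      rw [h2]
      exact h1
    have hnz : Summable (fun i => lam i * ‖z i‖) := by
      refine Summable.of_nonneg_of_le (fun i => mul_nonneg (hlam i) (norm_nonneg _))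
        (fun i => ?_) (hnorm.add habs)
      have hle : ‖z i‖ ≤ ‖x i‖ + |f (x i)| := by
        rw [hzdef, Prod.norm_def]
        simp only [Real.norm_eq_abs]
        exact max_le (le_add_of_nonneg_right (abs_nonneg _))
          (le_add_of_nonneg_left (norm_nonneg _))
      calc lam i * ‖z i‖ ≤ lam i * (‖x i‖ + |f (x i)|) :=
            mul_le_mul_of_nonneg_left hle (hlam i)
        _ = lam i * ‖x i‖ + |a i| := by
            simp only [hadef, abs_mul, abs_of_nonneg (hlam i)]
            ring
    have hEpi : Convex ℝ {q : (EuclideanSpace ℝ (Fin d)) × ℝ | q.1 ∈ D ∧ f q.1 ≤ q.2} :=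
      hf.convex_epigraph
    have hmem := sigma_convex_mem lam hlam hsum z hz hnz hEpi
      (fun i _ => ⟨hx i, le_refl _⟩)
    exact hmem.2
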